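/- (Theorem 2, general α.) For every real α > 1 and all x, x' ∈ [−C_q/2, C_q/2], the Rényi divergence of order α between the quantized-Gaussian pmfs at x and x' is bounded by ε_∞: (1/(α−1))·log(∑_{r=0}^{k−1} P_x(r)^α · P_{x'}(r)^{1−α}) ≤ log( δ / ∫_{B(k−2)}^{B(k−1)} f_{−C_q/2}(t)·(t−B(k−2)) dt ). -/

import Mathlib

open MeasureTheory Real

/-- Density of the normal distribution `N(x, σ²)`. -/
noncomputable def gpdf (σ x t : ℝ) : ℝ :=
  (1 / (σ * Real.sqrt (2 * Real.pi))) * Real.exp (-(t - x) ^ 2 / (2 * σ ^ 2))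

/-- Quantization levels `B(r) = -C_q + r · δ`, with `δ = 2·C_q/(k-1)`. -/
noncomputable def Blev (Cq : ℝ) (k : ℕ) (r : ℕ) : ℝ :=
  -Cq + (r : ℝ) * (2 * Cq / ((k : ℝ) - 1))

/-- The quantized-Gaussian pmf `P_x(r)` on `{0, 1, …, k-1}`. -/
noncomputable def qgPmf (Cq σ : ℝ) (k : ℕ) (x : ℝ) (r : ℕ) : ℝ :=
  if r = 0 then
    (∫ t in Set.Iic (Blev Cq k 0), gpdf σ x t)
      + ∫ t in (Blev Cq k 0)..(Blev Cq k 1),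
          gpdf σ x t * (Blev Cq k 1 - t) / (2 * Cq / ((k : ℝ) - 1))
  else if r = k - 1 then
    (∫ t in (Blev Cq k (k - 2))..(Blev Cq k (k - 1)),
        gpdf σ x t * (t - Blev Cq k (k - 2)) / (2 * Cq / ((k : ℝ) - 1)))
      + ∫ t in Set.Ici (Blev Cq k (k - 1)), gpdf σ x t
  else
    (∫ t in (Blev Cq k (r - 1))..(Blev Cq k r),
        gpdf σ x t * (t - Blev Cq k (r - 1)) / (2 * Cq / ((k : ℝ) - 1)))
      + ∫ t in (Blev Cq k r)..(Blev Cq k (r + 1)),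
          gpdf σ x t * (Blev Cq k (r + 1) - t) / (2 * Cq / ((k : ℝ) - 1))
noncomputable def qtent (δ c u : ℝ) : ℝ := max 0 (δ - |u - c|)

noncomputable def qramp (δ D u : ℝ) : ℝ := if u ∈ Set.Ioc (D - δ) D then u - (D - δ) else 0

section
variable {σ δ D c : ℝ}


lemma gpdf_pos (hσ : 0 < σ) {x t : ℝ} : 0 < gpdf σ x t := by unfold gpdf; positivity

lemma gpdf_cont (σ x : ℝ) : Continuous (gpdf σ x) := by unfold gpdf; fun_prop

lemma gpdf_anti (hσ : 0 < σ) {s t : ℝ} (h : |s| ≤ |t|) : gpdf σ 0 t ≤ gpdf σ 0 s := by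
  unfold gpdf
  have h2 : s ^ 2 ≤ t ^ 2 := by
    have := pow_le_pow_left₀ (abs_nonneg s) h 2
    rwa [sq_abs, sq_abs] at this
  have hden : (0:ℝ) < 2 * σ ^ 2 := by positivity
  refine mul_le_mul_of_nonneg_left (Real.exp_le_exp.2 ?_) (by positivity)
  rw [div_le_div_iff₀ hden hden]
  nlinarith

lemma gpdf_integrable (hσ : 0 < σ) (x : ℝ) : Integrable (gpdf σ x) := by
  have h : Integrable (fun t : ℝ => Real.exp (-(2*σ^2)⁻¹ * t ^ 2)) :=
    integrable_exp_neg_mul_sq (by positivity)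
  refine ((h.comp_sub_right x).const_mul (1 / (σ * Real.sqrt (2 * Real.pi)))).congr ?_
  filter_upwards with t
  simp only [gpdf, Function.comp]; ring_nf

lemma qtent_cont (δ c : ℝ) : Continuous (qtent δ c) := by unfold qtent; fun_prop

lemma qtent_nonneg (δ c u : ℝ) : 0 ≤ qtent δ c u := le_max_left _ _

lemma qtent_le (δ c u : ℝ) : qtent δ c u ≤ max 0 δ := by
  unfold qtent
  apply max_le (le_max_left _ _)
  apply le_max_of_le_right
  have := abs_nonneg (u - c); linarith

/-- Translation comparison for set integrals of the centered Gaussian. -/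
lemma gauss_Ioc_translate (hσ : 0 < σ) {a ℓ e : ℝ} (ha : 0 ≤ a) (hℓ : 0 ≤ ℓ) (he : 0 ≤ e) :
    ∫ u in Set.Ioc (a + e) (a + e + ℓ), gpdf σ 0 u ≤ ∫ u in Set.Ioc a (a + ℓ), gpdf σ 0 u := by
  have h1 : (∫ u in Set.Ioc (a + e) (a + e + ℓ), gpdf σ 0 u)
      = ∫ u in (a + e)..(a + e + ℓ), gpdf σ 0 u :=
    (intervalIntegral.integral_of_le (by linarith)).symm
  have h2 : (∫ u in Set.Ioc a (a + ℓ), gpdf σ 0 u) = ∫ u in a..(a + ℓ), gpdf σ 0 u :=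
    (intervalIntegral.integral_of_le (by linarith)).symm
  rw [h1, h2]
  have h3 : (∫ u in (a + e)..(a + e + ℓ), gpdf σ 0 u)
      = ∫ u in a..(a + ℓ), gpdf σ 0 (u + e) := by
    rw [intervalIntegral.integral_comp_add_right (fun u => gpdf σ 0 u) e]
    ring_nf
  rw [h3]
  apply intervalIntegral.integral_mono_on (by linarith)
  · exact ((gpdf_cont σ 0).comp (by fun_prop)).intervalIntegrable _ _
  · exact (gpdf_cont σ 0).intervalIntegrable _ _
  · intro u hu
    apply gpdf_anti hσ
    rw [abs_of_nonneg (by cases hu; linarith), abs_of_nonneg (by cases hu; linarith)]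
    linarith

/-- The slice comparison: Gaussian measure (as real integral) of the ramp slice is at most
that of the tent slice. -/
lemma slice_le (hσ : 0 < σ) (hc0 : 0 ≤ c) (hcD : c ≤ D) {t : ℝ} (ht : 0 < t) :
    ∫ u in Set.Ioc (D - δ + t) D, gpdf σ 0 u
      ≤ ∫ u in Set.Ioo (c - (δ - t)) (c + (δ - t)), gpdf σ 0 u := by
  set g := gpdf σ 0 with hg
  have hgi : Integrable g := gpdf_integrable hσ 0
  have hgnn : ∀ u, 0 ≤ g u := fun u => (gpdf_pos hσ).le
  set ℓ := δ - t with hℓdef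
  rcases le_or_gt ℓ 0 with hℓ | hℓ
  · rw [Set.Ioc_eq_empty (by intro h; simp only [hℓdef] at *; linarith)]
    rw [Measure.restrict_empty, integral_zero_measure]
    exact setIntegral_nonneg measurableSet_Ioo (fun u _ => hgnn u)
  · have hDt : D - δ + t = D - ℓ := by rw [hℓdef]; ring
    rw [hDt]
    rcases le_or_gt ℓ c with hcase | hcase
    · -- ℓ ≤ c : translate to Ioc (c-ℓ) c then include
      have t1 : (∫ u in Set.Ioc (D - ℓ) D, g u) ≤ ∫ u in Set.Ioc (c - ℓ) c, g u := by
        have := gauss_Ioc_translate hσ (a := c - ℓ) (ℓ := ℓ) (e := D - c)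
          (by linarith) hℓ.le (by linarith)
        convert this using 3 <;> ring
      refine t1.trans (setIntegral_mono_set hgi.integrableOn
        (Filter.Eventually.of_forall hgnn) (Filter.Eventually.of_forall ?_))
      intro u hu
      exact ⟨hu.1, lt_of_le_of_lt hu.2 (by linarith)⟩
    · rcases le_or_gt ℓ D with hD | hD
      · -- c < ℓ ≤ D : compare with Ioc 0 ℓ
        have t1 : (∫ u in Set.Ioc (D - ℓ) D, g u) ≤ ∫ u in Set.Ioc 0 ℓ, g u := by
          have := gauss_Ioc_translate hσ (a := 0) (ℓ := ℓ) (e := D - ℓ)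
            le_rfl hℓ.le (by linarith)
          convert this using 3 <;> ring
        refine t1.trans ?_
        rw [integral_Ioc_eq_integral_Ioo]
        refine setIntegral_mono_set hgi.integrableOn
          (Filter.Eventually.of_forall hgnn) (Filter.Eventually.of_forall ?_)
        intro u hu
        exact ⟨by cases hu; linarith, by cases hu; linarith⟩
      · -- c < ℓ, D < ℓ : inclusion
        refine setIntegral_mono_set hgi.integrableOn
          (Filter.Eventually.of_forall hgnn) (Filter.Eventually.of_forall ?_)
        intro u hu
        cases hu
        constructor <;> linarith

lemma qramp_nonneg (δ D u : ℝ) : 0 ≤ qramp δ D u := by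
  unfold qramp
  split
  · rename_i h; linarith [h.1]
  · exact le_rfl

lemma integrable_gpdf_mul_qtent (hσ : 0 < σ) (δ c : ℝ) :
    Integrable (fun u => gpdf σ 0 u * qtent δ c u) := by
  refine (((gpdf_integrable hσ 0).const_mul (max 0 δ)).mono
    ((gpdf_cont σ 0).mul (qtent_cont δ c)).aestronglyMeasurable ?_)
  filter_upwards with u
  rw [Real.norm_eq_abs, Real.norm_eq_abs,
    abs_of_nonneg (mul_nonneg (le_max_left 0 δ) (gpdf_pos hσ).le),
    abs_of_nonneg (mul_nonneg (gpdf_pos hσ).le (qtent_nonneg δ c u))]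
  rw [mul_comm (max 0 δ) _]
  exact mul_le_mul_of_nonneg_left (qtent_le δ c u) (gpdf_pos hσ).le

lemma integrable_gpdf_mul_qramp (hσ : 0 < σ) (δ D : ℝ) :
    Integrable (fun u => gpdf σ 0 u * qramp δ D u) := by
  have h : (fun u => gpdf σ 0 u * qramp δ D u)
      = (Set.Ioc (D - δ) D).indicator (fun u => gpdf σ 0 u * (u - (D - δ))) := by
    ext u
    by_cases hu : u ∈ Set.Ioc (D - δ) D <;> simp [qramp, hu, Set.indicator_of_mem,
      Set.indicator_of_notMem]
  rw [h]
  refine (IntegrableOn.integrable_indicator ?_ measurableSet_Ioc)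
  exact Continuous.integrableOn_Ioc ((gpdf_cont σ 0).mul (by fun_prop))

/-- Core comparison: the Gaussian-weighted tent integral dominates the ramp integral. -/
lemma tent_ge_ramp (hσ : 0 < σ) (hδ : 0 < δ) (hc0 : 0 ≤ c) (hcD : c ≤ D) :
    (∫ u, gpdf σ 0 u * qramp δ D u) ≤ ∫ u, gpdf σ 0 u * qtent δ c u := by
  set g := gpdf σ 0 with hg
  have hgm : Measurable g := (gpdf_cont σ 0).measurable
  have hgnn : ∀ u, 0 ≤ g u := fun u => (gpdf_pos hσ).le
  set μ := volume.withDensity (fun u => ENNReal.ofReal (g u)) with hμ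
  have hμs : ∀ s : Set ℝ, MeasurableSet s → μ s = ENNReal.ofReal (∫ u in s, g u) := by
    intro s ms
    rw [hμ, withDensity_apply _ ms,
      ← ofReal_integral_eq_lintegral_ofReal ((gpdf_integrable hσ 0).integrableOn)
        (Filter.Eventually.of_forall hgnn)]
  haveI : IsFiniteMeasure μ := by
    constructor
    rw [hμs _ MeasurableSet.univ]
    exact ENNReal.ofReal_lt_top
  -- lintegral layercake on both sides
  have hqr_m : Measurable (qramp δ D) := by
    unfold qramp
    exact Measurable.ite measurableSet_Ioc (by fun_prop) (by fun_prop)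
  have hqt_m : Measurable (qtent δ c) := (qtent_cont δ c).measurable
  have lc1 : ∫⁻ u, ENNReal.ofReal (qramp δ D u) ∂μ
      = ∫⁻ t in Set.Ioi (0:ℝ), μ {u | t < qramp δ D u} :=
    lintegral_eq_lintegral_meas_lt μ (Filter.Eventually.of_forall (fun u => qramp_nonneg δ D u))
      hqr_m.aemeasurable
  have lc2 : ∫⁻ u, ENNReal.ofReal (qtent δ c u) ∂μ
      = ∫⁻ t in Set.Ioi (0:ℝ), μ {u | t < qtent δ c u} :=
    lintegral_eq_lintegral_meas_lt μ (Filter.Eventually.of_forall (fun u => qtent_nonneg δ c u))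
      hqt_m.aemeasurable
  -- identify slice sets
  have hset1 : ∀ t : ℝ, 0 < t → {u | t < qramp δ D u} = Set.Ioc (D - δ + t) D := by
    intro t ht
    ext u
    simp only [Set.mem_setOf_eq, qramp, Set.mem_Ioc]
    constructor
    · intro h
      split at h
      · rename_i hu; exact ⟨by cases hu; linarith, hu.2⟩
      · linarith
    · intro h
      rw [if_pos ⟨by linarith [h.1], h.2⟩]
      linarith [h.1]
  have hset2 : ∀ t : ℝ, 0 < t →
      {u | t < qtent δ c u} = Set.Ioo (c - (δ - t)) (c + (δ - t)) := by
    intro t ht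
    ext u
    simp only [Set.mem_setOf_eq, qtent, Set.mem_Ioo, lt_max_iff]
    constructor
    · rintro (h | h)
      · linarith
      · have := abs_lt.mp (by linarith : |u - c| < δ - t)
        constructor <;> linarith
    · intro h
      right
      have : |u - c| < δ - t := abs_lt.mpr ⟨by linarith [h.1], by linarith [h.2]⟩
      linarith
  -- compare slices
  have hslice : ∫⁻ t in Set.Ioi (0:ℝ), μ {u | t < qramp δ D u}
      ≤ ∫⁻ t in Set.Ioi (0:ℝ), μ {u | t < qtent δ c u} := by
    refine setLIntegral_mono' measurableSet_Ioi ?_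
    intro t ht
    rw [hset1 t ht, hset2 t ht, hμs _ measurableSet_Ioc, hμs _ measurableSet_Ioo]
    exact ENNReal.ofReal_le_ofReal (slice_le hσ hc0 hcD ht)
  -- transfer to volume lintegrals
  have w1 : ∫⁻ u, ENNReal.ofReal (g u * qramp δ D u)
      = ∫⁻ u, ENNReal.ofReal (qramp δ D u) ∂μ := by
    rw [hμ, lintegral_withDensity_eq_lintegral_mul _ (by fun_prop) (by fun_prop)]
    congr 1
    ext u
    simp only [Pi.mul_apply]
    rw [← ENNReal.ofReal_mul (hgnn u)]
  have w2 : ∫⁻ u, ENNReal.ofReal (g u * qtent δ c u)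
      = ∫⁻ u, ENNReal.ofReal (qtent δ c u) ∂μ := by
    rw [hμ, lintegral_withDensity_eq_lintegral_mul _ (by fun_prop) (by fun_prop)]
    congr 1
    ext u
    simp only [Pi.mul_apply]
    rw [← ENNReal.ofReal_mul (hgnn u)]
  -- conclude
  have key : ∫⁻ u, ENNReal.ofReal (g u * qramp δ D u)
      ≤ ∫⁻ u, ENNReal.ofReal (g u * qtent δ c u) := by
    rw [w1, w2, lc1, lc2]; exact hslice
  have r1 : ENNReal.ofReal (∫ u, g u * qramp δ D u) = ∫⁻ u, ENNReal.ofReal (g u * qramp δ D u) :=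
    ofReal_integral_eq_lintegral_ofReal (integrable_gpdf_mul_qramp hσ δ D)
      (Filter.Eventually.of_forall (fun u => mul_nonneg (hgnn u) (qramp_nonneg δ D u)))
  have r2 : ENNReal.ofReal (∫ u, g u * qtent δ c u) = ∫⁻ u, ENNReal.ofReal (g u * qtent δ c u) :=
    ofReal_integral_eq_lintegral_ofReal (integrable_gpdf_mul_qtent hσ δ c)
      (Filter.Eventually.of_forall (fun u => mul_nonneg (hgnn u) (qtent_nonneg δ c u)))
  have := r1 ▸ r2 ▸ key
  exact (ENNReal.ofReal_le_ofReal_iff (integral_nonneg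
    (fun u => mul_nonneg (hgnn u) (qtent_nonneg δ c u)))).mp this

lemma gpdf_translate (σ x t : ℝ) : gpdf σ x t = gpdf σ 0 (t - x) := by simp [gpdf]

/-- substitution to centered coordinates for interval integrals -/
lemma gauss_shift (σ x a b : ℝ) (w : ℝ → ℝ) :
    ∫ t in a..b, gpdf σ x t * w t
      = ∫ u in (a - x)..(b - x), gpdf σ 0 u * w (u + x) := by
  rw [← intervalIntegral.integral_comp_sub_right (fun u => gpdf σ 0 u * w (u + x)) x]
  refine intervalIntegral.integral_congr ?_
  intro t _
  simp only [sub_add_cancel]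
  rw [gpdf_translate]

lemma gauss_even (σ : ℝ) (u : ℝ) : gpdf σ 0 (-u) = gpdf σ 0 u := by
  simp [gpdf, neg_sq]

lemma tent_integral_neg (σ δ c : ℝ) :
    ∫ u, gpdf σ 0 u * qtent δ c u = ∫ u, gpdf σ 0 u * qtent δ (-c) u := by
  rw [← integral_neg_eq_self (fun u => gpdf σ 0 u * qtent δ (-c) u)]
  congr 1
  ext u
  rw [gauss_even]
  congr 1
  unfold qtent
  congr 2
  rw [show -u - -c = -(u - c) by ring, abs_neg]

lemma tent_integral_split (hσ : 0 < σ) (hδ : 0 < δ) (c : ℝ) :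
    ∫ u, gpdf σ 0 u * qtent δ c u
      = (∫ u in Set.Ioc (c - δ) c, gpdf σ 0 u * (u - (c - δ)))
        + ∫ u in Set.Ioc c (c + δ), gpdf σ 0 u * (c + δ - u) := by
  have hfun : (fun u => gpdf σ 0 u * qtent δ c u)
      = (fun u => (Set.Ioc (c - δ) c).indicator (fun u => gpdf σ 0 u * (u - (c - δ))) u
          + (Set.Ioc c (c + δ)).indicator (fun u => gpdf σ 0 u * (c + δ - u)) u) := by
    ext u
    unfold qtent
    rcases le_or_gt u (c - δ) with h1 | h1
    · rw [Set.indicator_of_notMem (by simp [Set.mem_Ioc]; intro h; linarith),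
        Set.indicator_of_notMem (by simp [Set.mem_Ioc]; intro h; linarith),
        max_eq_left (by rw [abs_of_nonpos (by linarith)]; linarith)]
      ring
    · rcases le_or_gt u c with h2 | h2
      · rw [Set.indicator_of_mem (Set.mem_Ioc.mpr ⟨h1, h2⟩),
          Set.indicator_of_notMem (by simp [Set.mem_Ioc]; intro h; linarith),
          max_eq_right (by rw [abs_of_nonpos (by linarith)]; linarith)]
        rw [abs_of_nonpos (by linarith)]
        ring_nf
      · rcases le_or_gt u (c + δ) with h3 | h3
        · rw [Set.indicator_of_notMem (by simp [Set.mem_Ioc]; intro h; linarith),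
            Set.indicator_of_mem (Set.mem_Ioc.mpr ⟨h2, h3⟩),
            max_eq_right (by rw [abs_of_nonneg (by linarith)]; linarith)]
          rw [abs_of_nonneg (by linarith)]
          ring_nf
        · rw [Set.indicator_of_notMem (by simp [Set.mem_Ioc]; intro h; linarith),
            Set.indicator_of_notMem (by simp [Set.mem_Ioc]; intro h; linarith),
            max_eq_left (by rw [abs_of_nonneg (by linarith)]; linarith)]
          ring
  rw [hfun, integral_add, integral_indicator measurableSet_Ioc,
    integral_indicator measurableSet_Ioc]
  · exact (Continuous.integrableOn_Ioc ((gpdf_cont σ 0).mul (by fun_prop))).integrable_indicator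
      measurableSet_Ioc
  · exact (Continuous.integrableOn_Ioc ((gpdf_cont σ 0).mul (by fun_prop))).integrable_indicator
      measurableSet_Ioc

lemma ramp_integral_eq (hσ : 0 < σ) (hδ : 0 < δ) (D : ℝ) :
    ∫ u, gpdf σ 0 u * qramp δ D u
      = ∫ u in Set.Ioc (D - δ) D, gpdf σ 0 u * (u - (D - δ)) := by
  have hfun : (fun u => gpdf σ 0 u * qramp δ D u)
      = (fun u => (Set.Ioc (D - δ) D).indicator (fun u => gpdf σ 0 u * (u - (D - δ))) u) := by
    ext u
    unfold qramp
    by_cases hu : u ∈ Set.Ioc (D - δ) D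
    · rw [Set.indicator_of_mem hu, if_pos hu]
    · rw [Set.indicator_of_notMem hu, if_neg hu]; ring
  rw [hfun, integral_indicator measurableSet_Ioc]

end
section
variable {Cq σ x : ℝ} {k : ℕ}

lemma kcast (hk : 2 ≤ k) : (1:ℝ) ≤ (k:ℝ) - 1 := by
  have : (2:ℝ) ≤ (k:ℝ) := by exact_mod_cast hk
  linarith

lemma delta_pos (hC : 0 < Cq) (hk : 2 ≤ k) : 0 < 2 * Cq / ((k : ℝ) - 1) := by
  have := kcast hk; positivity

lemma Blev_succ (r : ℕ) : Blev Cq k (r+1) = Blev Cq k r + 2 * Cq / ((k : ℝ) - 1) := by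
  simp [Blev]; push_cast; ring

lemma Blev_mono (hC : 0 < Cq) (hk : 2 ≤ k) {i j : ℕ} (h : i ≤ j) :
    Blev Cq k i ≤ Blev Cq k j := by
  have hd := delta_pos hC hk
  unfold Blev
  have : (i:ℝ) ≤ (j:ℝ) := by exact_mod_cast h
  nlinarith

lemma Blev_zero : Blev Cq k 0 = -Cq := by simp [Blev]

lemma Blev_last (hC : 0 < Cq) (hk : 2 ≤ k) : Blev Cq k (k-1) = Cq := by
  unfold Blev
  have h1 : ((k - 1 : ℕ) : ℝ) = (k:ℝ) - 1 := by
    have : 1 ≤ k := by omega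
    push_cast [this]; ring
  rw [h1]
  have h2 : (k:ℝ) - 1 ≠ 0 := by have := kcast hk; linarith
  field_simp
  ring

lemma qgPmf_eq (hk : 2 ≤ k) {r : ℕ} (hr : r < k) :
    qgPmf Cq σ k x r =
      (if r = 0 then (∫ t in Set.Iic (Blev Cq k 0), gpdf σ x t)
        else ∫ t in (Blev Cq k (r-1))..(Blev Cq k r),
          gpdf σ x t * (t - Blev Cq k (r-1)) / (2 * Cq / ((k : ℝ) - 1)))
      + (if r = k - 1 then (∫ t in Set.Ici (Blev Cq k (k - 1)), gpdf σ x t)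
        else ∫ t in (Blev Cq k r)..(Blev Cq k (r + 1)),
          gpdf σ x t * (Blev Cq k (r+1) - t) / (2 * Cq / ((k : ℝ) - 1))) := by
  rcases eq_or_ne r 0 with h0 | h0
  · subst h0
    have hne : 0 ≠ k - 1 := by omega
    simp [qgPmf, if_neg hne]
  · rcases eq_or_ne r (k-1) with h1 | h1
    · subst h1
      have : k - 1 - 1 = k - 2 := by omega
      simp [qgPmf, if_neg h0, this]
    · simp [qgPmf, if_neg h0, if_neg h1]

lemma qgPmf_sum_eq_one (hC : 0 < Cq) (hσ : 0 < σ) (hk : 2 ≤ k) (x : ℝ) :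
    ∑ r ∈ Finset.range k, qgPmf Cq σ k x r = 1 := by
  set δ := 2 * Cq / ((k : ℝ) - 1) with hδdef
  have hδ : 0 < δ := delta_pos hC hk
  have hint : Integrable (gpdf σ x) := by
    have h : Integrable (fun t : ℝ => Real.exp (-(2*σ^2)⁻¹ * t ^ 2)) :=
      integrable_exp_neg_mul_sq (by positivity)
    refine ((h.comp_sub_right x).const_mul (1 / (σ * Real.sqrt (2 * Real.pi)))).congr ?_
    filter_upwards with t
    simp only [gpdf, Function.comp]; ring_nf
  have hcont : Continuous (gpdf σ x) := by unfold gpdf; fun_prop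
  have hone : ∫ t, gpdf σ x t = 1 := by
    unfold gpdf
    have h1 : ∀ t:ℝ, -(t - x) ^ 2 / (2 * σ ^ 2) = -(2*σ^2)⁻¹ * (t - x)^2 := by
      intro t; ring
    simp_rw [h1, integral_const_mul]
    rw [integral_sub_right_eq_self (μ := volume) (fun u => Real.exp (-(2*σ^2)⁻¹ * u^2)) x,
      integral_gaussian]
    rw [show π / (2*σ^2)⁻¹ = (σ * Real.sqrt (2*π))^2 by
      rw [mul_pow, sq_sqrt (by positivity)]; field_simp, Real.sqrt_sq (by positivity)]
    field_simp
  -- rewrite the sum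
  have hsum : ∑ r ∈ Finset.range k, qgPmf Cq σ k x r
      = (∑ r ∈ Finset.range k,
          (if r = 0 then (∫ t in Set.Iic (Blev Cq k 0), gpdf σ x t)
            else ∫ t in (Blev Cq k (r-1))..(Blev Cq k r),
              gpdf σ x t * (t - Blev Cq k (r-1)) / δ))
        + (∑ r ∈ Finset.range k,
          (if r = k - 1 then (∫ t in Set.Ici (Blev Cq k (k - 1)), gpdf σ x t)
            else ∫ t in (Blev Cq k r)..(Blev Cq k (r + 1)),
              gpdf σ x t * (Blev Cq k (r+1) - t) / δ)) := by
    rw [← Finset.sum_add_distrib]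
    refine Finset.sum_congr rfl ?_
    intro r hr
    exact qgPmf_eq hk (Finset.mem_range.mp hr)
  obtain ⟨m, hm⟩ : ∃ m, k = m + 1 := ⟨k - 1, by omega⟩
  subst hm
  set k := m + 1 with hk'
  have hm1 : k - 1 = m := by omega
  rw [hsum]
  rw [hk', Finset.sum_range_succ' _ m, Finset.sum_range_succ _ m, ← hk']
  have e1 : ∀ i ∈ Finset.range m,
      (if i + 1 = 0 then (∫ t in Set.Iic (Blev Cq k 0), gpdf σ x t)
        else ∫ t in (Blev Cq k (i+1-1))..(Blev Cq k (i+1)),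
          gpdf σ x t * (t - Blev Cq k (i+1-1)) / δ)
      = ∫ t in (Blev Cq k i)..(Blev Cq k (i+1)), gpdf σ x t * (t - Blev Cq k i) / δ := by
    intro i _
    simp
  have e2 : ∀ i ∈ Finset.range m,
      (if i = k - 1 then (∫ t in Set.Ici (Blev Cq k (k - 1)), gpdf σ x t)
        else ∫ t in (Blev Cq k i)..(Blev Cq k (i + 1)),
          gpdf σ x t * (Blev Cq k (i+1) - t) / δ)
      = ∫ t in (Blev Cq k i)..(Blev Cq k (i+1)), gpdf σ x t * (Blev Cq k (i+1) - t) / δ := by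
    intro i hi
    have : i ≠ k - 1 := by have := Finset.mem_range.mp hi; omega
    rw [if_neg this]
  rw [Finset.sum_congr rfl e1, Finset.sum_congr rfl e2]
  simp only [if_pos rfl, hm1, if_pos]
  -- now combine the two interval sums
  have hpair : ∀ i ∈ Finset.range m,
      (∫ t in (Blev Cq k i)..(Blev Cq k (i+1)), gpdf σ x t * (t - Blev Cq k i) / δ)
      + (∫ t in (Blev Cq k i)..(Blev Cq k (i+1)), gpdf σ x t * (Blev Cq k (i+1) - t) / δ)
      = ∫ t in (Blev Cq k i)..(Blev Cq k (i+1)), gpdf σ x t := by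
    intro i _
    rw [← intervalIntegral.integral_add (by apply Continuous.intervalIntegrable; fun_prop)
      (by apply Continuous.intervalIntegrable; fun_prop)]
    refine intervalIntegral.integral_congr ?_
    intro t _
    have : Blev Cq k (i+1) = Blev Cq k i + δ := Blev_succ i
    rw [this]
    field_simp
    ring
  have hintervals : ∑ i ∈ Finset.range m,
      (∫ t in (Blev Cq k i)..(Blev Cq k (i+1)), gpdf σ x t)
      = ∫ t in (Blev Cq k 0)..(Blev Cq k m), gpdf σ x t := by
    apply intervalIntegral.sum_integral_adjacent_intervals
    intro i _
    exact (hcont.intervalIntegrable _ _)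
  have combine : ∑ i ∈ Finset.range m,
        (∫ t in (Blev Cq k i)..(Blev Cq k (i+1)), gpdf σ x t * (t - Blev Cq k i) / δ)
      + ∑ i ∈ Finset.range m,
        (∫ t in (Blev Cq k i)..(Blev Cq k (i+1)), gpdf σ x t * (Blev Cq k (i+1) - t) / δ)
      = ∫ t in (Blev Cq k 0)..(Blev Cq k m), gpdf σ x t := by
    rw [← hintervals, ← Finset.sum_add_distrib]
    exact Finset.sum_congr rfl hpair
  have hle : Blev Cq k 0 ≤ Blev Cq k m := Blev_mono hC hk (Nat.zero_le m)
  -- final assembly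
  have hioc : (∫ t in (Blev Cq k 0)..(Blev Cq k m), gpdf σ x t)
      = ∫ t in Set.Ioc (Blev Cq k 0) (Blev Cq k m), gpdf σ x t :=
    intervalIntegral.integral_of_le hle
  have hsplit : (∫ t in Set.Ioc (Blev Cq k 0) (Blev Cq k m), gpdf σ x t)
      + (∫ t in Set.Ioi (Blev Cq k m), gpdf σ x t)
      = ∫ t in Set.Ioi (Blev Cq k 0), gpdf σ x t := by
    rw [← setIntegral_union (Set.Ioc_disjoint_Ioi le_rfl) measurableSet_Ioi
      (hint.integrableOn) (hint.integrableOn), Set.Ioc_union_Ioi_eq_Ioi hle]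
  have hfull : (∫ t in Set.Iic (Blev Cq k 0), gpdf σ x t)
      + (∫ t in Set.Ioi (Blev Cq k 0), gpdf σ x t) = 1 := by
    rw [intervalIntegral.integral_Iic_add_Ioi hint.integrableOn hint.integrableOn, hone]
  rw [integral_Ici_eq_integral_Ioi]
  -- goal should now be an algebraic rearrangement
  have := combine
  linarith [combine, hsplit, hfull]
end

lemma intervalIntegral_div_const {f : ℝ → ℝ} {a b d : ℝ} :
    (∫ t in a..b, f t / d) = (∫ t in a..b, f t) / d :=
  intervalIntegral.integral_div d f

lemma gauss_shift_Iic (σ x b : ℝ) :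
    ∫ t in Set.Iic b, gpdf σ x t = ∫ u in Set.Iic (b - x), gpdf σ 0 u := by
  rw [← integral_indicator measurableSet_Iic, ← integral_indicator measurableSet_Iic,
    ← integral_sub_right_eq_self (fun u => (Set.Iic (b - x)).indicator (gpdf σ 0) u) x]
  congr 1
  ext t
  by_cases h : t ≤ b
  · rw [Set.indicator_of_mem (Set.mem_Iic.mpr (by linarith : t - x ≤ b - x)),
      Set.indicator_of_mem (Set.mem_Iic.mpr h), gpdf_translate]
  · rw [Set.indicator_of_notMem (by simp [Set.mem_Iic]; linarith),
      Set.indicator_of_notMem (by simp [Set.mem_Iic]; linarith)]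

lemma gauss_shift_Ici (σ x b : ℝ) :
    ∫ t in Set.Ici b, gpdf σ x t = ∫ u in Set.Ici (b - x), gpdf σ 0 u := by
  rw [← integral_indicator measurableSet_Ici, ← integral_indicator measurableSet_Ici,
    ← integral_sub_right_eq_self (fun u => (Set.Ici (b - x)).indicator (gpdf σ 0) u) x]
  congr 1
  ext t
  by_cases h : b ≤ t
  · rw [Set.indicator_of_mem (Set.mem_Ici.mpr (by linarith : b - x ≤ t - x)),
      Set.indicator_of_mem (Set.mem_Ici.mpr h), gpdf_translate]
  · rw [Set.indicator_of_notMem (by simp [Set.mem_Ici]; linarith),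
      Set.indicator_of_notMem (by simp [Set.mem_Ici]; linarith)]

lemma qgPmf_ge_tent (hC : 0 < Cq) (hσ : 0 < σ) (hk : 2 ≤ k) (x : ℝ) {r : ℕ} (hr : r < k) :
    (1 / (2 * Cq / ((k : ℝ) - 1)))
        * ∫ u, gpdf σ 0 u * qtent (2 * Cq / ((k : ℝ) - 1)) (Blev Cq k r - x) u
      ≤ qgPmf Cq σ k x r := by
  set δ := 2 * Cq / ((k : ℝ) - 1) with hδdef
  have hδ : 0 < δ := delta_pos hC hk
  set c := Blev Cq k r - x with hcdef
  rw [tent_integral_split hσ hδ c]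
  set P1 := ∫ u in Set.Ioc (c - δ) c, gpdf σ 0 u * (u - (c - δ)) with hP1
  set P2 := ∫ u in Set.Ioc c (c + δ), gpdf σ 0 u * (c + δ - u) with hP2
  -- equality forms
  have F1 : ∀ {s : ℕ}, s + 1 = r →
      P1 = δ * ∫ t in (Blev Cq k s)..(Blev Cq k r), gpdf σ x t * (t - Blev Cq k s) / δ := by
    intro s hs
    have hBs : Blev Cq k s = c + x - δ := by
      have := Blev_succ (Cq := Cq) (k := k) s
      rw [hs] at this
      rw [hcdef] at *
      linarith
    rw [intervalIntegral_div_const, gauss_shift σ x _ _ (fun t => t - Blev Cq k s), hBs]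
    have hb1 : c + x - δ - x = c - δ := by ring
    have hb2 : Blev Cq k r - x = c := by rw [hcdef]
    rw [hb1, hb2, intervalIntegral.integral_of_le (by linarith)]
    rw [hP1]
    have : ∀ u, gpdf σ 0 u * (u + x - (c + x - δ)) = gpdf σ 0 u * (u - (c - δ)) := by
      intro u; ring_nf
    simp_rw [this]
    field_simp
  have F2 : ∀ {s : ℕ}, s = r + 1 →
      P2 = δ * ∫ t in (Blev Cq k r)..(Blev Cq k s), gpdf σ x t * (Blev Cq k s - t) / δ := by
    intro s hs
    have hBs : Blev Cq k s = c + x + δ := by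
      subst hs
      have := Blev_succ (Cq := Cq) (k := k) r
      rw [hcdef] at *
      linarith
    rw [intervalIntegral_div_const, gauss_shift σ x _ _ (fun t => Blev Cq k s - t), hBs]
    have hb1 : c + x + δ - x = c + δ := by ring
    have hb2 : Blev Cq k r - x = c := by rw [hcdef]
    rw [hb1, hb2, intervalIntegral.integral_of_le (by linarith)]
    rw [hP2]
    have : ∀ u, gpdf σ 0 u * (c + x + δ - (u + x)) = gpdf σ 0 u * (c + δ - u) := by
      intro u; ring_nf
    simp_rw [this]
    field_simp
  -- tail bounds
  have gcont : Continuous (gpdf σ 0) := gpdf_cont σ 0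
  have gnn : ∀ u : ℝ, (0:ℝ) ≤ gpdf σ 0 u := fun u => (gpdf_pos hσ).le
  have hIic : ∫ t in Set.Iic (Blev Cq k 0), gpdf σ x t = ∫ u in Set.Iic (c - δ + δ), gpdf σ 0 u →
      True := fun _ => trivial
  have F1' : r = 0 → P1 ≤ δ * ∫ t in Set.Iic (Blev Cq k 0), gpdf σ x t := by
    intro h0
    have hshift : ∫ t in Set.Iic (Blev Cq k 0), gpdf σ x t = ∫ u in Set.Iic c, gpdf σ 0 u := by
      have hc0 : c = Blev Cq k 0 - x := by rw [hcdef, h0]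
      rw [hc0, gauss_shift_Iic]
    rw [hshift, hP1]
    have step1 : (∫ u in Set.Ioc (c - δ) c, gpdf σ 0 u * (u - (c - δ)))
        ≤ ∫ u in Set.Ioc (c - δ) c, gpdf σ 0 u * δ := by
      refine setIntegral_mono_on ((gcont.mul (by fun_prop)).integrableOn_Ioc)
        ((gcont.mul (by fun_prop)).integrableOn_Ioc) measurableSet_Ioc ?_
      intro u hu
      exact mul_le_mul_of_nonneg_left (by cases hu; linarith) (gnn u)
    refine step1.trans ?_
    rw [integral_mul_const, mul_comm δ _]
    refine mul_le_mul_of_nonneg_right ?_ hδ.le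
    refine setIntegral_mono_set (gpdf_integrable hσ 0).integrableOn
      (Filter.Eventually.of_forall gnn) (Filter.Eventually.of_forall ?_)
    intro u hu
    exact hu.2
  have F2' : r = k - 1 → P2 ≤ δ * ∫ t in Set.Ici (Blev Cq k (k-1)), gpdf σ x t := by
    intro h0
    have hshift : ∫ t in Set.Ici (Blev Cq k (k-1)), gpdf σ x t = ∫ u in Set.Ici c, gpdf σ 0 u := by
      have hc0 : c = Blev Cq k (k-1) - x := by rw [hcdef, h0]
      rw [hc0, gauss_shift_Ici]
    rw [hshift, hP2]
    have step1 : (∫ u in Set.Ioc c (c + δ), gpdf σ 0 u * (c + δ - u))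
        ≤ ∫ u in Set.Ioc c (c + δ), gpdf σ 0 u * δ := by
      refine setIntegral_mono_on ((gcont.mul (by fun_prop)).integrableOn_Ioc)
        ((gcont.mul (by fun_prop)).integrableOn_Ioc) measurableSet_Ioc ?_
      intro u hu
      exact mul_le_mul_of_nonneg_left (by cases hu; linarith) (gnn u)
    refine step1.trans ?_
    rw [integral_mul_const, mul_comm δ _]
    refine mul_le_mul_of_nonneg_right ?_ hδ.le
    refine setIntegral_mono_set (gpdf_integrable hσ 0).integrableOn
      (Filter.Eventually.of_forall gnn) (Filter.Eventually.of_forall ?_)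
    intro u hu
    exact hu.1.le
  -- branch analysis
  rw [qgPmf_eq hk hr]
  rcases eq_or_ne r 0 with h0 | h0
  · have hne : r ≠ k - 1 := by omega
    rw [if_pos h0, if_neg hne]
    rw [F2 rfl]
    have h1 := F1' h0
    set T := ∫ t in Set.Iic (Blev Cq k 0), gpdf σ x t with hT
    set A := ∫ t in (Blev Cq k r)..(Blev Cq k (r+1)), gpdf σ x t * (Blev Cq k (r+1) - t) / δ
    calc (1/δ) * (P1 + δ * A) ≤ (1/δ) * (δ * T + δ * A) := by
          refine mul_le_mul_of_nonneg_left (by linarith) (by positivity)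
      _ = T + A := by field_simp
  · rcases eq_or_ne r (k-1) with h1 | h1
    · rw [if_neg h0, if_pos h1]
      have hs : (r - 1) + 1 = r := by omega
      rw [F1 hs]
      have h2 := F2' h1
      set T := ∫ t in Set.Ici (Blev Cq k (k-1)), gpdf σ x t with hT
      set B := ∫ t in (Blev Cq k (r-1))..(Blev Cq k r), gpdf σ x t * (t - Blev Cq k (r-1)) / δ
        with hB
      calc (1/δ) * (δ * B + P2) ≤ (1/δ) * (δ * B + δ * T) := by
            refine mul_le_mul_of_nonneg_left (by linarith) (by positivity)
        _ = B + T := by field_simp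
    · rw [if_neg h0, if_neg h1]
      have hs : (r - 1) + 1 = r := by omega
      rw [F1 hs, F2 rfl]
      have : (1/δ) * (δ * (∫ t in (Blev Cq k (r-1))..(Blev Cq k r),
            gpdf σ x t * (t - Blev Cq k (r-1)) / δ)
          + δ * ∫ t in (Blev Cq k r)..(Blev Cq k (r+1)), gpdf σ x t * (Blev Cq k (r+1) - t) / δ)
          = (∫ t in (Blev Cq k (r-1))..(Blev Cq k r), gpdf σ x t * (t - Blev Cq k (r-1)) / δ)
          + ∫ t in (Blev Cq k r)..(Blev Cq k (r+1)), gpdf σ x t * (Blev Cq k (r+1) - t) / δ := by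
        field_simp
      rw [this]

lemma Blev_pred (hk : 2 ≤ k) (hC : 0 < Cq) :
    Blev Cq k (k-2) = Cq - 2 * Cq / ((k : ℝ) - 1) := by
  have h1 : (k - 2) + 1 = k - 1 := by omega
  have h2 := Blev_succ (Cq := Cq) (k := k) (k-2)
  rw [h1, Blev_last hC hk] at h2
  linarith

lemma Iref_eq (hC : 0 < Cq) (hσ : 0 < σ) (hk : 2 ≤ k) :
    (∫ t in (Blev Cq k (k-2))..(Blev Cq k (k-1)),
        gpdf σ (-(Cq/2)) t * (t - Blev Cq k (k-2)))
      = ∫ u, gpdf σ 0 u * qramp (2 * Cq / ((k : ℝ) - 1)) (3*Cq/2) u := by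
  set δ := 2 * Cq / ((k : ℝ) - 1) with hδdef
  have hδ : 0 < δ := delta_pos hC hk
  rw [ramp_integral_eq hσ hδ, gauss_shift σ (-(Cq/2)) _ _ (fun t => t - Blev Cq k (k-2)),
    Blev_pred hk hC, Blev_last hC hk]
  have e1 : Cq - δ - -(Cq/2) = 3*Cq/2 - δ := by ring
  have e2 : Cq - -(Cq/2) = 3*Cq/2 := by ring
  rw [e1, e2, intervalIntegral.integral_of_le (by linarith)]
  refine setIntegral_congr_fun measurableSet_Ioc ?_
  intro u _
  simp only
  rw [hδdef]; ring

lemma Iref_pos (hC : 0 < Cq) (hσ : 0 < σ) (hk : 2 ≤ k) :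
    0 < ∫ t in (Blev Cq k (k-2))..(Blev Cq k (k-1)),
        gpdf σ (-(Cq/2)) t * (t - Blev Cq k (k-2)) := by
  have hδ : 0 < 2 * Cq / ((k : ℝ) - 1) := delta_pos hC hk
  have hlt : Blev Cq k (k-2) < Blev Cq k (k-1) := by
    have h1 : (k - 2) + 1 = k - 1 := by omega
    have h2 := Blev_succ (Cq := Cq) (k := k) (k-2)
    rw [h1] at h2
    linarith
  refine intervalIntegral.intervalIntegral_pos_of_pos_on ?_ ?_ hlt
  · exact (((gpdf_cont σ _).mul (continuous_id.sub continuous_const))).intervalIntegrable _ _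
  · intro t ht
    exact mul_pos (gpdf_pos hσ) (by cases ht; linarith)

lemma qgPmf_ge_Iref (hC : 0 < Cq) (hσ : 0 < σ) (hk : 2 ≤ k) {x : ℝ}
    (hx : x ∈ Set.Icc (-(Cq / 2)) (Cq / 2)) {r : ℕ} (hr : r < k) :
    (∫ t in (Blev Cq k (k-2))..(Blev Cq k (k-1)),
        gpdf σ (-(Cq/2)) t * (t - Blev Cq k (k-2))) / (2 * Cq / ((k : ℝ) - 1))
      ≤ qgPmf Cq σ k x r := by
  set δ := 2 * Cq / ((k : ℝ) - 1) with hδdef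
  have hδ : 0 < δ := delta_pos hC hk
  set c := Blev Cq k r - x with hcdef
  have hcD : |c| ≤ 3*Cq/2 := by
    have hB0 : Blev Cq k 0 ≤ Blev Cq k r := Blev_mono hC hk (Nat.zero_le r)
    have hBk : Blev Cq k r ≤ Blev Cq k (k-1) := Blev_mono hC hk (by omega)
    rw [Blev_zero] at hB0
    rw [Blev_last hC hk] at hBk
    rw [abs_le]
    obtain ⟨hx1, hx2⟩ := hx
    constructor <;> linarith
  have key : (∫ u, gpdf σ 0 u * qramp δ (3*Cq/2) u)
      ≤ ∫ u, gpdf σ 0 u * qtent δ c u := by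
    rcases le_or_gt 0 c with hc | hc
    · exact tent_ge_ramp hσ hδ hc (by rw [abs_of_nonneg hc] at hcD; exact hcD)
    · rw [tent_integral_neg σ δ c]
      exact tent_ge_ramp hσ hδ (by linarith)
        (by rw [abs_of_neg hc] at hcD; linarith)
  have h2 := qgPmf_ge_tent hC hσ hk x hr
  rw [← hcdef] at h2
  calc (∫ t in (Blev Cq k (k-2))..(Blev Cq k (k-1)),
        gpdf σ (-(Cq/2)) t * (t - Blev Cq k (k-2))) / δ
      = (1/δ) * ∫ u, gpdf σ 0 u * qramp δ (3*Cq/2) u := by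
        rw [Iref_eq hC hσ hk, ← hδdef]; ring
    _ ≤ (1/δ) * ∫ u, gpdf σ 0 u * qtent δ c u := by
        exact mul_le_mul_of_nonneg_left key (by positivity)
    _ ≤ qgPmf Cq σ k x r := h2


/-- Theorem 2, general `α > 1`: the Rényi divergence of order `α` between the
quantized-Gaussian pmfs at `x, x' ∈ [-C_q/2, C_q/2]` is bounded by `ε_∞`. -/
theorem quantGauss_renyi_le_eps_infty (Cq σ : ℝ) (hC : 0 < Cq) (hσ : 0 < σ)
    (k : ℕ) (hk : 2 ≤ k) (α : ℝ) (hα : 1 < α) (x x' : ℝ)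
    (hx : x ∈ Set.Icc (-(Cq / 2)) (Cq / 2)) (hx' : x' ∈ Set.Icc (-(Cq / 2)) (Cq / 2)) :
    (1 / (α - 1)) * Real.log (∑ r ∈ Finset.range k,
        qgPmf Cq σ k x r ^ α * qgPmf Cq σ k x' r ^ (1 - α))
      ≤ Real.log ((2 * Cq / ((k : ℝ) - 1)) /
          ∫ t in (Blev Cq k (k - 2))..(Blev Cq k (k - 1)),
            gpdf σ (-(Cq / 2)) t * (t - Blev Cq k (k - 2))) := by
  set δ := 2 * Cq / ((k : ℝ) - 1) with hδdef
  have hδ : 0 < δ := delta_pos hC hk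
  set I := ∫ t in (Blev Cq k (k - 2))..(Blev Cq k (k - 1)),
      gpdf σ (-(Cq / 2)) t * (t - Blev Cq k (k - 2)) with hI
  have hIpos : 0 < I := Iref_pos hC hσ hk
  set m := I / δ with hm
  have hmpos : 0 < m := by positivity
  have hminx : ∀ r < k, m ≤ qgPmf Cq σ k x r := fun r hr => qgPmf_ge_Iref hC hσ hk hx hr
  have hminx' : ∀ r < k, m ≤ qgPmf Cq σ k x' r := fun r hr => qgPmf_ge_Iref hC hσ hk hx' hr
  have hsum1 : ∑ r ∈ Finset.range k, qgPmf Cq σ k x r = 1 := qgPmf_sum_eq_one hC hσ hk x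
  have hle1 : ∀ r < k, qgPmf Cq σ k x r ≤ 1 := by
    intro r hr
    rw [← hsum1]
    refine Finset.single_le_sum (fun i hi => ?_) (Finset.mem_range.mpr hr)
    exact le_trans hmpos.le (hminx i (Finset.mem_range.mp hi))
  set S := ∑ r ∈ Finset.range k, qgPmf Cq σ k x r ^ α * qgPmf Cq σ k x' r ^ (1 - α) with hS
  have hα1 : (0:ℝ) < α - 1 := by linarith
  -- upper bound on S
  have hterm : ∀ r ∈ Finset.range k,
      qgPmf Cq σ k x r ^ α * qgPmf Cq σ k x' r ^ (1 - α)
        ≤ qgPmf Cq σ k x r * m ^ (1 - α) := by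
    intro r hrm
    have hr := Finset.mem_range.mp hrm
    have hpx : 0 < qgPmf Cq σ k x r := lt_of_lt_of_le hmpos (hminx r hr)
    have hpx' : 0 < qgPmf Cq σ k x' r := lt_of_lt_of_le hmpos (hminx' r hr)
    have b1 : qgPmf Cq σ k x r ^ α ≤ qgPmf Cq σ k x r := by
      have := Real.rpow_le_rpow_of_exponent_ge hpx (hle1 r hr) (le_of_lt hα)
      rwa [Real.rpow_one] at this
    have b2 : qgPmf Cq σ k x' r ^ (1 - α) ≤ m ^ (1 - α) := by
      rw [show (1 - α) = -(α - 1) by ring, Real.rpow_neg hpx'.le, Real.rpow_neg hmpos.le]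
      have hmono : m ^ (α - 1) ≤ qgPmf Cq σ k x' r ^ (α - 1) :=
        Real.rpow_le_rpow hmpos.le (hminx' r hr) hα1.le
      exact inv_anti₀ (Real.rpow_pos_of_pos hmpos _) hmono
    calc qgPmf Cq σ k x r ^ α * qgPmf Cq σ k x' r ^ (1 - α)
        ≤ qgPmf Cq σ k x r * qgPmf Cq σ k x' r ^ (1 - α) :=
          mul_le_mul_of_nonneg_right b1 (Real.rpow_nonneg hpx'.le _)
      _ ≤ qgPmf Cq σ k x r * m ^ (1 - α) :=
          mul_le_mul_of_nonneg_left b2 hpx.le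
  have hSle : S ≤ m ^ (1 - α) := by
    calc S ≤ ∑ r ∈ Finset.range k, qgPmf Cq σ k x r * m ^ (1 - α) :=
          Finset.sum_le_sum hterm
      _ = (∑ r ∈ Finset.range k, qgPmf Cq σ k x r) * m ^ (1 - α) := by
          rw [Finset.sum_mul]
      _ = m ^ (1 - α) := by rw [hsum1, one_mul]
  have hSpos : 0 < S := by
    refine Finset.sum_pos (fun r hrm => ?_) ⟨0, Finset.mem_range.mpr (by omega)⟩
    have hr := Finset.mem_range.mp hrm
    exact mul_pos (Real.rpow_pos_of_pos (lt_of_lt_of_le hmpos (hminx r hr)) _)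
      (Real.rpow_pos_of_pos (lt_of_lt_of_le hmpos (hminx' r hr)) _)
  have hlog : Real.log S ≤ (1 - α) * Real.log m := by
    rw [← Real.log_rpow hmpos]
    exact Real.log_le_log hSpos hSle
  have final : (1 / (α - 1)) * Real.log S ≤ -Real.log m := by
    have h1 : (1 / (α - 1)) * Real.log S ≤ (1 / (α - 1)) * ((1 - α) * Real.log m) :=
      mul_le_mul_of_nonneg_left hlog (by positivity)
    have h2 : (1 / (α - 1)) * ((1 - α) * Real.log m) = -Real.log m := by
      field_simp
      ring
    linarith
  have : -Real.log m = Real.log (δ / I) := by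
    rw [hm, ← Real.log_inv, inv_div]
  linarith [this ▸ final]
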